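/- arXiv:2411.12599 — 7 statements merged into one kernel-verified Lean document; each statement's English description precedes it below -/
import Mathlib

section
/- Let G be a connected graph on p ≥ 3 vertices. If u and v are any two adjacent vertices in the central graph C[G], then there exists a third vertex w in C[G] that is adjacent to neither u nor v. -/
open Finset

namespace EccPaper

variable {V : Type*}

noncomputable def ecc [Fintype V] (G : SimpleGraph V) (v : V) : ℕ :=
  Finset.univ.sup (fun u => G.dist v u)

noncomputable def graphDiam [Fintype V] (G : SimpleGraph V) : ℕ :=
  Finset.univ.sup (fun v => ecc G v)

noncomputable def eccMatR [Fintype V] (G : SimpleGraph V) : Matrix V V ℝ :=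
  fun u v => if G.dist u v = min (ecc G u) (ecc G v) then (G.dist u v : ℝ) else 0

noncomputable def eccWiener [Fintype V] (G : SimpleGraph V) : ℝ :=
  (∑ u, ∑ v, eccMatR G u v) / 2

noncomputable def totalEcc [Fintype V] (G : SimpleGraph V) : ℝ :=
  ∑ v, (ecc G v : ℝ)

noncomputable def eccConnIndex [Fintype V] (G : SimpleGraph V) [DecidableRel G.Adj] : ℝ :=
  ∑ v, (G.degree v : ℝ) * (ecc G v : ℝ)

lemma eccMatR_isHermitian [Fintype V] (G : SimpleGraph V) : (eccMatR G).IsHermitian := by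
  ext i j
  simp only [eccMatR, Matrix.conjTranspose_apply, starRingEnd_apply, star_trivial]
  rw [SimpleGraph.dist_comm, min_comm]

noncomputable def eccEnergy [Fintype V] [DecidableEq V] (G : SimpleGraph V) : ℝ :=
  ∑ i, |(eccMatR_isHermitian G).eigenvalues i|

noncomputable def eccSpecRadius [Fintype V] [DecidableEq V] (G : SimpleGraph V) : ℝ :=
  ⨆ i, |(eccMatR_isHermitian G).eigenvalues i|

def eccGraph [Fintype V] (G : SimpleGraph V) : SimpleGraph V where
  Adj u v := u ≠ v ∧ G.dist u v = min (ecc G u) (ecc G v)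
  symm := by
    constructor
    rintro u v ⟨h1, h2⟩
    exact ⟨h1.symm, by rwa [SimpleGraph.dist_comm, min_comm]⟩
  loopless := ⟨fun v h => h.1 rfl⟩

def IsIrreducible [Fintype V] (M : Matrix V V ℝ) : Prop :=
  ¬ ∃ S : Set V, S.Nonempty ∧ S ≠ Set.univ ∧ ∀ i ∈ S, ∀ j ∉ S, M i j = 0

def centralGraph [DecidableEq V] (G : SimpleGraph V) [DecidableRel G.Adj] :
    SimpleGraph (V ⊕ G.edgeSet) where
  Adj x y :=
    match x, y with
    | Sum.inl u, Sum.inl v => u ≠ v ∧ ¬ G.Adj u v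
    | Sum.inl u, Sum.inr e => u ∈ (e : Sym2 V)
    | Sum.inr e, Sum.inl u => u ∈ (e : Sym2 V)
    | Sum.inr _, Sum.inr _ => False
  symm := by
    constructor
    rintro (u | e) (v | f) h
    · exact ⟨h.1.symm, fun hadj => h.2 hadj.symm⟩
    · exact h
    · exact h
    · exact h
  loopless := by
    constructor
    rintro (u | e) h
    · exact h.1 rfl
    · exact h

lemma exists_adj_of_conn [Fintype V] (G : SimpleGraph V) (hconn : G.Connected)
    (hp : 2 ≤ Fintype.card V) (c : V) : ∃ d, G.Adj c d := by
  obtain ⟨x, hx⟩ := Fintype.exists_ne_of_one_lt_card (by omega) c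
  obtain ⟨p⟩ := hconn c x
  cases p with
  | nil => exact absurd rfl hx.symm
  | cons h _ => exact ⟨_, h⟩

lemma exists_third [Fintype V] [DecidableEq V] (hp : 3 ≤ Fintype.card V) (a b : V) :
    ∃ c : V, c ≠ a ∧ c ≠ b := by
  by_contra h
  push_neg at h
  have hsub : (Finset.univ : Finset V) ⊆ {a, b} := by
    intro x _
    by_cases hxa : x = a
    · simp [hxa]
    · simp [h x hxa]
  have := Finset.card_le_card hsub
  have h2 : ({a, b} : Finset V).card ≤ 2 := by
    refine le_trans (Finset.card_insert_le _ _) ?_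
    simp only [Finset.card_singleton]
    omega
  simp only [Finset.card_univ] at this
  omega

lemma aux_mixed [Fintype V] [DecidableEq V] (G : SimpleGraph V) [DecidableRel G.Adj]
    (hconn : G.Connected) (hp : 3 ≤ Fintype.card V)
    (a : V) (e : G.edgeSet) (ha : a ∈ (e : Sym2 V)) :
    ∃ w : V ⊕ G.edgeSet, w ≠ Sum.inl a ∧ w ≠ Sum.inr e ∧
      ¬ (centralGraph G).Adj w (Sum.inl a) ∧ ¬ (centralGraph G).Adj w (Sum.inr e) := by
  classical
  set b := Sym2.Mem.other ha with hb
  have hebe : s(a, b) = (e : Sym2 V) := Sym2.other_spec ha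
  have hadjab : G.Adj a b := by
    rw [← SimpleGraph.mem_edgeSet, hebe]; exact e.2
  obtain ⟨c, hca, hcb⟩ := exists_third hp a b
  obtain ⟨d, hcd⟩ := exists_adj_of_conn G hconn (by omega) c
  by_cases hda : d = a
  · -- c is adjacent to a, and c ∉ e
    refine ⟨Sum.inl c, by simp [hca], by simp, ?_, ?_⟩
    · intro hadj
      exact hadj.2 (hda ▸ hcd)
    · intro hadj
      have : c ∈ (e : Sym2 V) := hadj
      rw [← hebe, Sym2.mem_iff] at this
      rcases this with h | h
      · exact hca h
      · exact hcb h
  · -- the edge (c,d) avoids a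
    have hcne : c ≠ a := hca
    refine ⟨Sum.inr ⟨s(c, d), G.mem_edgeSet.mpr hcd⟩, by simp, ?_, ?_, ?_⟩
    · intro h
      have : (s(c, d) : Sym2 V) = (e : Sym2 V) := congrArg Subtype.val (Sum.inr.inj h)
      have : a ∈ (s(c, d) : Sym2 V) := this ▸ ha
      rw [Sym2.mem_iff] at this
      rcases this with h' | h'
      · exact hcne h'.symm
      · exact hda h'.symm
    · intro hadj
      have : a ∈ (s(c, d) : Sym2 V) := hadj
      rw [Sym2.mem_iff] at this
      rcases this with h' | h'
      · exact hcne h'.symm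
      · exact hda h'.symm
    · intro hadj
      exact hadj

lemma aux_ll [Fintype V] [DecidableEq V] (G : SimpleGraph V) [DecidableRel G.Adj]
    (hconn : G.Connected) (hp : 3 ≤ Fintype.card V)
    (a b : V) (hab : a ≠ b) (hnadj : ¬ G.Adj a b) :
    ∃ w : V ⊕ G.edgeSet, w ≠ Sum.inl a ∧ w ≠ Sum.inl b ∧
      ¬ (centralGraph G).Adj w (Sum.inl a) ∧ ¬ (centralGraph G).Adj w (Sum.inl b) := by
  classical
  have hreach : G.Reachable a b := hconn a b
  have hdist2 : 2 ≤ G.dist a b := by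
    have h0 : G.dist a b ≠ 0 := by
      intro h
      exact hab (hreach.dist_eq_zero_iff.mp h ▸ rfl)
    have h1 : G.dist a b ≠ 1 := by
      intro h
      exact hnadj ((SimpleGraph.dist_eq_one_iff_adj).mp h)
    omega
  obtain ⟨p, hp'⟩ := hreach.exists_walk_length_eq_dist
  cases p with
  | nil => simp at hp'; simp [SimpleGraph.dist_self] at hdist2
  | @cons _ c _ h q =>
    cases q with
    | nil => simp at hp'; omega
    | @cons _ d _ h' r =>
      -- h : G.Adj a c, h' : G.Adj c d, r : G.Walk d b
      simp only [SimpleGraph.Walk.length_cons] at hp'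
      have hca : c ≠ a := h.ne'
      have hcb : c ≠ b := by
        intro hcb
        exact hnadj (hcb ▸ h)
      by_cases hcbadj : G.Adj c b
      · refine ⟨Sum.inl c, by simp [hca], by simp [hcb], ?_, ?_⟩
        · intro hadj
          exact hadj.2 h.symm
        · intro hadj
          exact hadj.2 hcbadj
      · have hda : d ≠ a := by
          intro hda
          have := SimpleGraph.dist_le (r.copy hda rfl)
          rw [SimpleGraph.Walk.length_copy] at this
          omega
        have hdb : d ≠ b := by
          intro hdb
          exact hcbadj (hdb ▸ h')
        refine ⟨Sum.inr ⟨s(c, d), G.mem_edgeSet.mpr h'⟩, by simp, by simp, ?_, ?_⟩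
        · intro hadj
          have : a ∈ (s(c, d) : Sym2 V) := hadj
          rw [Sym2.mem_iff] at this
          rcases this with h'' | h''
          · exact hca h''.symm
          · exact hda h''.symm
        · intro hadj
          have : b ∈ (s(c, d) : Sym2 V) := hadj
          rw [Sym2.mem_iff] at this
          rcases this with h'' | h''
          · exact hcb h''.symm
          · exact hdb h''.symm

/-- In the central graph of a connected graph on ≥3 vertices, any two
adjacent vertices have a third vertex adjacent to neither of them. -/
theorem stmt_0 {V : Type*} [Fintype V] [DecidableEq V] (G : SimpleGraph V) [DecidableRel G.Adj]
    (hconn : G.Connected) (hp : 3 ≤ Fintype.card V)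
    (u v : V ⊕ G.edgeSet) (huv : (centralGraph G).Adj u v) :
    ∃ w : V ⊕ G.edgeSet, w ≠ u ∧ w ≠ v ∧ ¬ (centralGraph G).Adj w u ∧ ¬ (centralGraph G).Adj w v := by
  classical
  match u, v with
  | Sum.inl a, Sum.inl b =>
    exact aux_ll G hconn hp a b huv.1 huv.2
  | Sum.inl a, Sum.inr e =>
    exact aux_mixed G hconn hp a e huv
  | Sum.inr e, Sum.inl a =>
    obtain ⟨w, h1, h2, h3, h4⟩ := aux_mixed G hconn hp a e huv
    exact ⟨w, h2, h1, h4, h3⟩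
  | Sum.inr e, Sum.inr f =>
    exact absurd huv (by simp [centralGraph])

end EccPaper
end

section
/- Let G be a connected triangle-free graph that is not isomorphic to K₁ or K₂. Then in the central graph C[G], every original vertex of G has eccentricity exactly 2, and every subdivision vertex has eccentricity 2 or 3. -/
open Finset

namespace EccPaper

variable {V : Type*}

section Dist


variable {W : Type*} {H : SimpleGraph W}

lemma dist_le_one {x y : W} (h : H.Adj x y) : H.dist x y ≤ 1 := by
  simpa using SimpleGraph.dist_le h.toWalk

lemma dist_le_two {x y z : W} (h1 : H.Adj x y) (h2 : H.Adj y z) : H.dist x z ≤ 2 := by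
  simpa using SimpleGraph.dist_le (SimpleGraph.Walk.cons h1 h2.toWalk)

lemma dist_le_three {x y z t : W} (h1 : H.Adj x y) (h2 : H.Adj y z) (h3 : H.Adj z t) :
    H.dist x t ≤ 3 := by
  simpa using SimpleGraph.dist_le (SimpleGraph.Walk.cons h1 (SimpleGraph.Walk.cons h2 h3.toWalk))

lemma dist_eq_two {x z : W} (hne : x ≠ z) (hnadj : ¬ H.Adj x z) {y : W}
    (h1 : H.Adj x y) (h2 : H.Adj y z) : H.dist x z = 2 := by
  have hle := dist_le_two h1 h2
  have hr : H.Reachable x z := ⟨SimpleGraph.Walk.cons h1 h2.toWalk⟩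
  have h0 : 0 < H.dist x z := hr.pos_dist_of_ne hne
  have h1' : H.dist x z ≠ 1 := fun h => hnadj (SimpleGraph.dist_eq_one_iff_adj.mp h)
  omega

end Dist

section Aux

variable [Fintype V] [DecidableEq V] (G : SimpleGraph V) [DecidableRel G.Adj]

lemma cg_adj_ll {u v : V} (h1 : u ≠ v) (h2 : ¬ G.Adj u v) :
    (centralGraph G).Adj (Sum.inl u) (Sum.inl v) := ⟨h1, h2⟩

lemma cg_adj_lr {u : V} (e : G.edgeSet) (h : u ∈ (e : Sym2 V)) :
    (centralGraph G).Adj (Sum.inl u) (Sum.inr e) := h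

lemma cg_adj_rl {u : V} (e : G.edgeSet) (h : u ∈ (e : Sym2 V)) :
    (centralGraph G).Adj (Sum.inr e) (Sum.inl u) := h

lemma no_tri (htf : G.CliqueFree 3) {a b v : V} (hab : G.Adj a b) :
    ¬ G.Adj v a ∨ ¬ G.Adj v b := by
  by_contra h
  push_neg at h
  exact htf {v, a, b} (SimpleGraph.is3Clique_triple_iff.mpr ⟨h.1, h.2, hab⟩)

/-- to a non-incident subdivision vertex, distance exactly 2 -/
lemma dist_inl_inr (htf : G.CliqueFree 3) {v : V} (e : G.edgeSet)
    (hv : v ∉ (e : Sym2 V)) : (centralGraph G).dist (Sum.inl v) (Sum.inr e) = 2 := by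
  obtain ⟨⟨s, hs⟩, rfl⟩ : ∃ p : G.edgeSet, p = e := ⟨e, rfl⟩
  induction s using Sym2.ind with
  | _ a b =>
    rw [SimpleGraph.mem_edgeSet] at hs
    have hv' : v ≠ a ∧ v ≠ b := by
      constructor <;> (rintro rfl; exact hv (by simp))
    have hne : (Sum.inl v : V ⊕ G.edgeSet) ≠ Sum.inr ⟨s(a,b), hs⟩ := by simp
    have key : ∀ c : V, c ∈ (s(a,b) : Sym2 V) → v ≠ c → ¬ G.Adj v c →
        (centralGraph G).dist (Sum.inl v) (Sum.inr ⟨s(a,b), hs⟩) = 2 := fun c hc h1 h2 =>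
      dist_eq_two hne (fun h => hv h) (cg_adj_ll G h1 h2) (cg_adj_lr G _ hc)
    rcases no_tri G htf hs (v := v) with h | h
    · exact key a (Sym2.mem_mk_left a b) hv'.1 h
    · exact key b (Sym2.mem_mk_right a b) hv'.2 h

/-- distance from an original vertex is at most 2 -/
lemma dist_inl_le (htf : G.CliqueFree 3) (v : V) (x : V ⊕ G.edgeSet) :
    (centralGraph G).dist (Sum.inl v) x ≤ 2 := by
  match x with
  | Sum.inl u =>
    by_cases huv : v = u
    · subst huv; simp [SimpleGraph.dist_self]
    · by_cases hadj : G.Adj v u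
      · exact dist_le_two (cg_adj_lr G ⟨s(v, u), hadj⟩ (Sym2.mem_mk_left v u))
          (cg_adj_rl G ⟨s(v, u), hadj⟩ (Sym2.mem_mk_right v u))
      · exact le_trans (dist_le_one (cg_adj_ll G huv hadj)) (by norm_num)
  | Sum.inr e =>
    by_cases hv : v ∈ (e : Sym2 V)
    · exact le_trans (dist_le_one (cg_adj_lr G e hv)) (by norm_num)
    · exact le_of_eq (dist_inl_inr G htf e hv)

/-- distance from a subdivision vertex to a non-incident original vertex is 2 -/
lemma dist_inr_inl (htf : G.CliqueFree 3) (e : G.edgeSet) {u : V}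
    (hu : u ∉ (e : Sym2 V)) : (centralGraph G).dist (Sum.inr e) (Sum.inl u) = 2 := by
  obtain ⟨⟨s, hs⟩, rfl⟩ : ∃ p : G.edgeSet, p = e := ⟨e, rfl⟩
  induction s using Sym2.ind with
  | _ a b =>
    rw [SimpleGraph.mem_edgeSet] at hs
    have hu' : u ≠ a ∧ u ≠ b := by
      constructor <;> (rintro rfl; exact hu (by simp))
    have hne : (Sum.inr (⟨s(a,b), hs⟩ : G.edgeSet) : V ⊕ G.edgeSet) ≠ Sum.inl u := by simp
    have key : ∀ c : V, c ∈ (s(a,b) : Sym2 V) → u ≠ c → ¬ G.Adj u c →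
        (centralGraph G).dist (Sum.inr (⟨s(a,b), hs⟩ : G.edgeSet)) (Sum.inl u) = 2 :=
      fun c hc h1 h2 =>
        dist_eq_two hne (fun h => hu h) (cg_adj_rl G _ hc)
          (cg_adj_ll G h1.symm (fun h => h2 h.symm))
    rcases no_tri G htf hs (v := u) with h | h
    · exact key a (Sym2.mem_mk_left a b) hu'.1 h
    · exact key b (Sym2.mem_mk_right a b) hu'.2 h

/-- distance from a subdivision vertex to anything is at most 3 -/
lemma dist_inr_le (htf : G.CliqueFree 3) (e : G.edgeSet) (x : V ⊕ G.edgeSet) :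
    (centralGraph G).dist (Sum.inr e) x ≤ 3 := by
  match x with
  | Sum.inl u =>
    by_cases hu : u ∈ (e : Sym2 V)
    · exact le_trans (dist_le_one (cg_adj_rl G e hu)) (by norm_num)
    · exact le_trans (le_of_eq (dist_inr_inl G htf e hu)) (by norm_num)
  | Sum.inr f =>
    obtain ⟨⟨s, hs⟩, rfl⟩ : ∃ p : G.edgeSet, p = e := ⟨e, rfl⟩
    induction s using Sym2.ind with
    | _ a b =>
      rw [SimpleGraph.mem_edgeSet] at hs
      by_cases haf : a ∈ (f : Sym2 V)
      · exact le_trans (dist_le_two (cg_adj_rl G _ (Sym2.mem_mk_left a b))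
          (cg_adj_lr G f haf)) (by norm_num)
      · obtain ⟨⟨t, ht⟩, rfl⟩ : ∃ p : G.edgeSet, p = f := ⟨f, rfl⟩
        induction t using Sym2.ind with
        | _ c d =>
          rw [SimpleGraph.mem_edgeSet] at ht
          have ha' : a ≠ c ∧ a ≠ d := by
            constructor <;> (rintro rfl; exact haf (by simp))
          have key : ∀ c' : V, c' ∈ (s(c,d) : Sym2 V) → a ≠ c' → ¬ G.Adj a c' →
              (centralGraph G).dist (Sum.inr (⟨s(a,b), hs⟩ : G.edgeSet))
                (Sum.inr (⟨s(c,d), ht⟩ : G.edgeSet)) ≤ 3 := fun c' hc' h1 h2 =>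
            dist_le_three (cg_adj_rl G _ (Sym2.mem_mk_left a b))
              (cg_adj_ll G h1 h2) (cg_adj_lr G _ hc')
          rcases no_tri G htf ht (v := a) with h | h
          · exact key c (Sym2.mem_mk_left c d) ha'.1 h
          · exact key d (Sym2.mem_mk_right c d) ha'.2 h

end Aux
lemma card_ge_three [Fintype V] [DecidableEq V] (G : SimpleGraph V) [DecidableRel G.Adj]
    (hconn : G.Connected)
    (h1 : ¬ Nonempty (G ≃g (⊤ : SimpleGraph (Fin 1))))
    (h2 : ¬ Nonempty (G ≃g (⊤ : SimpleGraph (Fin 2)))) :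
    3 ≤ Fintype.card V := by
  have hpos : 0 < Fintype.card V := @Fintype.card_pos V _ hconn.nonempty
  by_contra hlt
  push_neg at hlt
  interval_cases hc : Fintype.card V
  · -- card = 1
    have hsub : Subsingleton V := Fintype.card_le_one_iff_subsingleton.mp (by omega)
    refine h1 ⟨⟨Fintype.equivFinOfCardEq hc, ?_⟩⟩
    intro a b
    constructor
    · intro h; exact absurd (Subsingleton.elim _ _) h.ne
    · intro h; exact absurd (Subsingleton.elim a b) h.ne
  · -- card = 2
    have hadj : ∀ {u v : V}, u ≠ v → G.Adj u v := by
      intro u v hne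
      obtain ⟨p⟩ := hconn.preconnected u v
      cases p with
      | nil => exact absurd rfl hne
      | cons h q =>
        rename_i w
        by_cases hwv : w = v
        · subst hwv; exact h
        · exfalso
          have hwu : w ≠ u := fun hh => G.loopless.irrefl u (hh ▸ h)
          have h3 : ({u, v, w} : Finset V).card = 3 := by
            rw [Finset.card_insert_of_notMem (by simp [hne, Ne.symm hwu]),
              Finset.card_insert_of_notMem (by simp [Ne.symm hwv]),
              Finset.card_singleton]
          have := Finset.card_le_univ ({u, v, w} : Finset V)
          omega
    refine h2 ⟨⟨Fintype.equivFinOfCardEq hc, ?_⟩⟩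
    intro a b
    simp only [SimpleGraph.top_adj, ne_eq, EmbeddingLike.apply_eq_iff_eq]
    exact ⟨fun h => hadj h, fun h => h.ne⟩

lemma exists_adj_of [Fintype V] (G : SimpleGraph V) (hconn : G.Connected)
    (hcard : 2 ≤ Fintype.card V) (v : V) : ∃ u, G.Adj v u := by
  obtain ⟨w, hw⟩ := Fintype.exists_ne_of_one_lt_card (by omega) v
  obtain ⟨p⟩ := hconn.preconnected v w
  cases p with
  | nil => exact absurd rfl hw
  | cons h q => exact ⟨_, h⟩

lemma exists_not_mem_pair [Fintype V] [DecidableEq V] (hcard : 3 ≤ Fintype.card V) (a b : V) :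
    ∃ u : V, u ≠ a ∧ u ≠ b := by
  by_contra h
  push_neg at h
  have hsub : (Finset.univ : Finset V) ⊆ {a, b} := by
    intro u _
    simp only [Finset.mem_insert, Finset.mem_singleton]
    by_cases hu : u = a
    · exact Or.inl hu
    · exact Or.inr (h u hu)
  have h1 := Finset.card_le_card hsub
  have h2 : ({a, b} : Finset V).card ≤ 2 :=
    le_trans (Finset.card_insert_le a {b}) (by simp)
  rw [Finset.card_univ] at h1
  omega

/-- eccentricities in the central graph of a connected triangle-free graph
not isomorphic to K₁ or K₂. -/
theorem stmt_2 {V : Type*} [Fintype V] [DecidableEq V] (G : SimpleGraph V) [DecidableRel G.Adj]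
    (hconn : G.Connected) (htf : G.CliqueFree 3)
    (h1 : ¬ Nonempty (G ≃g (⊤ : SimpleGraph (Fin 1))))
    (h2 : ¬ Nonempty (G ≃g (⊤ : SimpleGraph (Fin 2)))) :
    (∀ v : V, ecc (centralGraph G) (Sum.inl v) = 2) ∧
    (∀ e : G.edgeSet, ecc (centralGraph G) (Sum.inr e) = 2 ∨ ecc (centralGraph G) (Sum.inr e) = 3) := by
  have hcard : 3 ≤ Fintype.card V := card_ge_three G hconn h1 h2
  constructor
  · intro v
    show Finset.univ.sup (fun u => (centralGraph G).dist (Sum.inl v) u) = 2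
    apply le_antisymm
    · exact Finset.sup_le fun u _ => dist_inl_le G htf v u
    · obtain ⟨u, hu⟩ := exists_adj_of G hconn (by omega) v
      have hd : (centralGraph G).dist (Sum.inl v) (Sum.inl u) = 2 :=
        dist_eq_two (fun h => hu.ne (Sum.inl.inj h)) (fun h => h.2 hu)
          (cg_adj_lr G ⟨s(v, u), hu⟩ (Sym2.mem_mk_left v u))
          (cg_adj_rl G ⟨s(v, u), hu⟩ (Sym2.mem_mk_right v u))
      exact le_trans (le_of_eq hd.symm) (Finset.le_sup (Finset.mem_univ (Sum.inl u)))
  · intro e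
    have hle : ecc (centralGraph G) (Sum.inr e) ≤ 3 :=
      Finset.sup_le fun x _ => dist_inr_le G htf e x
    have hge : 2 ≤ ecc (centralGraph G) (Sum.inr e) := by
      obtain ⟨⟨s, hs⟩, rfl⟩ : ∃ p : G.edgeSet, p = e := ⟨e, rfl⟩
      induction s using Sym2.ind with
      | _ a b =>
        obtain ⟨u, hua, hub⟩ := exists_not_mem_pair hcard a b
        have hu : u ∉ ((⟨s(a, b), hs⟩ : G.edgeSet) : Sym2 V) := by
          simp [Sym2.mem_iff, hua, hub]
        have hd := dist_inr_inl G htf ⟨s(a, b), hs⟩ hu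
        exact le_trans (le_of_eq hd.symm) (Finset.le_sup (Finset.mem_univ (Sum.inl u)))
    omega

end EccPaper
end

section
/- Let G be a connected triangle-free graph. Then the eccentric graph of the central graph C[G] is connected; equivalently, the eccentricity matrix of C[G] is irreducible. -/
set_option linter.unusedSectionVars false
set_option linter.unusedVariables false


open Finset

namespace EccPaper

variable {V : Type*}

section Aux

variable [Fintype V] [DecidableEq V] (G : SimpleGraph V) [DecidableRel G.Adj]

lemma cg_adj_inl_inl {u v : V} :
    (centralGraph G).Adj (Sum.inl u) (Sum.inl v) ↔ u ≠ v ∧ ¬ G.Adj u v := Iff.rfl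

lemma cg_adj_inl_inr {u : V} {e : G.edgeSet} :
    (centralGraph G).Adj (Sum.inl u) (Sum.inr e) ↔ u ∈ (e : Sym2 V) := Iff.rfl

lemma cg_adj_inr_inl {u : V} {e : G.edgeSet} :
    (centralGraph G).Adj (Sum.inr e) (Sum.inl u) ↔ u ∈ (e : Sym2 V) := Iff.rfl

lemma cg_not_adj_inr_inr {e f : G.edgeSet} :
    ¬ (centralGraph G).Adj (Sum.inr e) (Sum.inr f) := fun h => h

variable {G}

lemma cg_reach_inl (hconn : G.Connected) (u v : V) :
    (centralGraph G).Reachable (Sum.inl u) (Sum.inl v) := by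
  by_cases h : u = v
  · subst h; rfl
  by_cases hadj : G.Adj u v
  · have h1 : (centralGraph G).Adj (Sum.inl u) (Sum.inr ⟨s(u, v), hadj⟩) :=
      Sym2.mem_mk_left u v
    have h2 : (centralGraph G).Adj (Sum.inr (⟨s(u, v), hadj⟩ : G.edgeSet)) (Sum.inl v) :=
      Sym2.mem_mk_right u v
    exact h1.reachable.trans h2.reachable
  · exact SimpleGraph.Adj.reachable ⟨h, hadj⟩

lemma cg_connected (hconn : G.Connected) : (centralGraph G).Connected := by
  have hne : Nonempty V := hconn.nonempty
  haveI : Nonempty (V ⊕ G.edgeSet) := ⟨Sum.inl hne.some⟩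
  refine ⟨?_⟩
  rintro (u | e) (v | f)
  · exact cg_reach_inl hconn u v
  · refine ((cg_reach_inl hconn u ((f : Sym2 V).out.1)).trans ?_)
    exact SimpleGraph.Adj.reachable (Sym2.out_fst_mem _)
  · refine SimpleGraph.Reachable.trans ?_ (cg_reach_inl hconn ((e : Sym2 V).out.1) v)
    exact SimpleGraph.Adj.reachable (cg_adj_inr_inl G |>.mpr (Sym2.out_fst_mem _))
  · refine SimpleGraph.Reachable.trans
      (SimpleGraph.Adj.reachable ((cg_adj_inr_inl G).mpr (Sym2.out_fst_mem _))) ?_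
    refine ((cg_reach_inl hconn _ ((f : Sym2 V).out.1)).trans ?_)
    exact SimpleGraph.Adj.reachable (Sym2.out_fst_mem _)


lemma ecc_le_iff {G : SimpleGraph V} {v : V} {n : ℕ} :
    ecc G v ≤ n ↔ ∀ u, G.dist v u ≤ n := by
  simp [ecc, Finset.sup_le_iff]

lemma dist_le_ecc {G : SimpleGraph V} (v u : V) : G.dist v u ≤ ecc G v :=
  Finset.le_sup (Finset.mem_univ u)

lemma two_le_dist {W : Type*} {H : SimpleGraph W} {x y : W}
    (h : H.Reachable x y) (hne : x ≠ y) (hnadj : ¬ H.Adj x y) : 2 ≤ H.dist x y := by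
  have h0 := h.pos_dist_of_ne hne
  have h1 : H.dist x y ≠ 1 := fun h1 => hnadj (SimpleGraph.dist_eq_one_iff_adj.mp h1)
  omega

lemma dist_inl_inl_le_two (u v : V) :
    (centralGraph G).dist (Sum.inl u) (Sum.inl v) ≤ 2 := by
  by_cases h : u = v
  · subst h; rw [SimpleGraph.dist_self]; exact Nat.zero_le _
  by_cases hadj : G.Adj u v
  · have h1 : (centralGraph G).Adj (Sum.inl u) (Sum.inr ⟨s(u, v), hadj⟩) :=
      Sym2.mem_mk_left u v
    have h2 : (centralGraph G).Adj (Sum.inr (⟨s(u, v), hadj⟩ : G.edgeSet)) (Sum.inl v) :=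
      Sym2.mem_mk_right u v
    have := SimpleGraph.dist_le (SimpleGraph.Walk.cons h1 (SimpleGraph.Walk.cons h2
      SimpleGraph.Walk.nil))
    simpa using this
  · exact le_trans (le_of_eq (SimpleGraph.dist_eq_one_iff_adj.mpr ⟨h, hadj⟩)) one_le_two

lemma dist_inl_inr_le_two (htf : G.CliqueFree 3) (u : V) (e : G.edgeSet) :
    (centralGraph G).dist (Sum.inl u) (Sum.inr e) ≤ 2 := by
  by_cases hmem : u ∈ (e : Sym2 V)
  · exact le_trans (le_of_eq (SimpleGraph.dist_eq_one_iff_adj.mpr hmem)) one_le_two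
  · obtain ⟨s, hs⟩ := e
    revert hs hmem
    induction s using Sym2.inductionOn with
    | hf a b =>
      intro hs hmem
      rw [Sym2.mem_iff] at hmem
      push_neg at hmem
      have hab : G.Adj a b := hs
      have hx : ¬ G.Adj u a ∨ ¬ G.Adj u b := by
        by_contra h
        push_neg at h
        exact htf {u, a, b} (SimpleGraph.is3Clique_triple_iff.mpr ⟨h.1, h.2, hab⟩)
      rcases hx with hx | hx
      · have h1 : (centralGraph G).Adj (Sum.inl u) (Sum.inl a) := ⟨hmem.1, hx⟩
        have h2 : (centralGraph G).Adj (Sum.inl a) (Sum.inr ⟨s(a, b), hs⟩) :=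
          Sym2.mem_mk_left a b
        have := SimpleGraph.dist_le (SimpleGraph.Walk.cons h1 (SimpleGraph.Walk.cons h2
          SimpleGraph.Walk.nil))
        simpa using this
      · have h1 : (centralGraph G).Adj (Sum.inl u) (Sum.inl b) := ⟨hmem.2, hx⟩
        have h2 : (centralGraph G).Adj (Sum.inl b) (Sum.inr ⟨s(a, b), hs⟩) :=
          Sym2.mem_mk_right a b
        have := SimpleGraph.dist_le (SimpleGraph.Walk.cons h1 (SimpleGraph.Walk.cons h2
          SimpleGraph.Walk.nil))
        simpa using this

lemma ecc_inl_le_two (htf : G.CliqueFree 3) (u : V) :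
    ecc (centralGraph G) (Sum.inl u) ≤ 2 := by
  rw [ecc_le_iff]
  rintro (v | e)
  · exact dist_inl_inl_le_two u v
  · exact dist_inl_inr_le_two htf u e

lemma exists_neighbor (hconn : G.Connected) [Nontrivial V] (u : V) :
    ∃ v, G.Adj u v := by
  obtain ⟨v, hv⟩ := exists_ne u
  obtain ⟨p⟩ := hconn u v
  rcases p with _ | ⟨h, p⟩
  · exact absurd rfl hv.symm
  · exact ⟨_, h⟩


lemma dist_inl_inl_adj (hconn : G.Connected) {u v : V} (hadj : G.Adj u v) :
    (centralGraph G).dist (Sum.inl u) (Sum.inl v) = 2 := by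
  have hle := dist_inl_inl_le_two (G := G) u v
  have hge := two_le_dist ((cg_connected hconn) (Sum.inl u) (Sum.inl v))
    (fun h => hadj.ne (Sum.inl.inj h)) (fun h => h.2 hadj)
  omega

lemma ecc_inl_eq_two (hconn : G.Connected) (htf : G.CliqueFree 3) [Nontrivial V] (u : V) :
    ecc (centralGraph G) (Sum.inl u) = 2 := by
  have hle := ecc_inl_le_two (G := G) htf u
  obtain ⟨v, hv⟩ := exists_neighbor hconn u
  have h := dist_le_ecc (G := centralGraph G) (Sum.inl u) (Sum.inl v)
  rw [dist_inl_inl_adj hconn hv] at h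
  omega

lemma dist_inl_inr_eq_two (hconn : G.Connected) (htf : G.CliqueFree 3) {u : V}
    {e : G.edgeSet} (hmem : u ∉ (e : Sym2 V)) :
    (centralGraph G).dist (Sum.inl u) (Sum.inr e) = 2 := by
  have hle := dist_inl_inr_le_two (G := G) htf u e
  have hge := two_le_dist ((cg_connected hconn) (Sum.inl u) (Sum.inr e))
    (by simp) hmem
  omega

lemma eccG_adj_inl_inl (hconn : G.Connected) (htf : G.CliqueFree 3) [Nontrivial V]
    {u v : V} (hadj : G.Adj u v) :
    (eccGraph (centralGraph G)).Adj (Sum.inl u) (Sum.inl v) := by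
  refine ⟨fun h => hadj.ne (Sum.inl.inj h), ?_⟩
  rw [dist_inl_inl_adj hconn hadj, ecc_inl_eq_two hconn htf, ecc_inl_eq_two hconn htf,
    min_self]

lemma eccG_adj_inl_inr (hconn : G.Connected) (htf : G.CliqueFree 3) [Nontrivial V]
    {u : V} {e : G.edgeSet} (hmem : u ∉ (e : Sym2 V)) :
    (eccGraph (centralGraph G)).Adj (Sum.inl u) (Sum.inr e) := by
  have hd := dist_inl_inr_eq_two hconn htf hmem
  have h2 : 2 ≤ ecc (centralGraph G) (Sum.inr e) := by
    have h := dist_le_ecc (G := centralGraph G) (Sum.inr e) (Sum.inl u)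
    rwa [SimpleGraph.dist_comm, hd] at h
  refine ⟨by simp, ?_⟩
  rw [hd, ecc_inl_eq_two hconn htf]
  omega

lemma eccG_adj_endpoint (hconn : G.Connected) (htf : G.CliqueFree 3) [Nontrivial V]
    {a : V} {e : G.edgeSet} (hall : ∀ w : V, w ∈ (e : Sym2 V)) (ha : a ∈ (e : Sym2 V)) :
    (eccGraph (centralGraph G)).Adj (Sum.inl a) (Sum.inr e) := by
  have hd1 : (centralGraph G).dist (Sum.inl a) (Sum.inr e) = 1 :=
    SimpleGraph.dist_eq_one_iff_adj.mpr ha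
  have hecc1 : ecc (centralGraph G) (Sum.inr e) ≤ 1 := by
    rw [ecc_le_iff]
    rintro (w | f)
    · exact le_of_eq (SimpleGraph.dist_eq_one_iff_adj.mpr ((cg_adj_inr_inl G).mpr (hall w)))
    · have hfe : (f : Sym2 V) = (e : Sym2 V) := by
        clear hd1 ha
        obtain ⟨se, he⟩ := e
        obtain ⟨sf, hf⟩ := f
        simp only at hall ⊢
        revert he hall
        induction se using Sym2.inductionOn with | hf x y =>
        intro he hall
        revert hf
        induction sf using Sym2.inductionOn with | hf c d =>
        intro hf
        have hc := hall c; have hd := hall d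
        rw [Sym2.mem_iff] at hc hd
        have hcd : c ≠ d := (hf : G.Adj c d).ne
        rcases hc with rfl | rfl <;> rcases hd with rfl | rfl
        · exact absurd rfl hcd
        · rfl
        · exact Sym2.eq_swap
        · exact absurd rfl hcd
      have hfe' : f = e := Subtype.ext hfe
      subst hfe'
      rw [SimpleGraph.dist_self]
      omega
  have hecc1' : 1 ≤ ecc (centralGraph G) (Sum.inr e) := by
    have h := dist_le_ecc (G := centralGraph G) (Sum.inr e) (Sum.inl a)
    rwa [SimpleGraph.dist_comm, hd1] at h
  refine ⟨by simp, ?_⟩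
  rw [hd1, ecc_inl_eq_two hconn htf]
  omega

lemma eccG_reach_inl (hconn : G.Connected) (htf : G.CliqueFree 3) [Nontrivial V] (u v : V) :
    (eccGraph (centralGraph G)).Reachable (Sum.inl u) (Sum.inl v) := by
  obtain ⟨p⟩ := hconn u v
  induction p with
  | nil => rfl
  | cons h p ih => exact (eccG_adj_inl_inl hconn htf h).reachable.trans ih

lemma eccG_connected_of_nontrivial (hconn : G.Connected) (htf : G.CliqueFree 3) [Nontrivial V] :
    (eccGraph (centralGraph G)).Connected := by
  haveI : Nonempty (V ⊕ G.edgeSet) := ⟨Sum.inl (Classical.arbitrary V)⟩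
  have key : ∀ e : G.edgeSet, ∃ a, (eccGraph (centralGraph G)).Adj (Sum.inr e) (Sum.inl a) := by
    intro e
    by_cases h : ∃ w, w ∉ (e : Sym2 V)
    · obtain ⟨w, hw⟩ := h
      exact ⟨w, (eccG_adj_inl_inr hconn htf hw).symm⟩
    · push_neg at h
      exact ⟨(e : Sym2 V).out.1, (eccG_adj_endpoint hconn htf h (Sym2.out_fst_mem _)).symm⟩
  refine ⟨?_⟩
  rintro (u | e) (v | f)
  · exact eccG_reach_inl hconn htf u v
  · obtain ⟨a, ha⟩ := key f
    exact (eccG_reach_inl hconn htf u a).trans ha.symm.reachable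
  · obtain ⟨a, ha⟩ := key e
    exact ha.reachable.trans (eccG_reach_inl hconn htf a v)
  · obtain ⟨a, ha⟩ := key e
    obtain ⟨b, hb⟩ := key f
    exact ha.reachable.trans ((eccG_reach_inl hconn htf a b).trans hb.symm.reachable)

lemma eccG_connected_of_subsingleton (hconn : G.Connected) [Subsingleton V] :
    (eccGraph (centralGraph G)).Connected := by
  haveI : Nonempty V := hconn.nonempty
  haveI : Nonempty (V ⊕ G.edgeSet) := ⟨Sum.inl (Classical.arbitrary V)⟩
  have hempty : ∀ e : G.edgeSet, False := by
    rintro ⟨s, hs⟩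
    revert hs
    induction s using Sym2.inductionOn with | hf a b =>
    intro hs
    exact (hs : G.Adj a b).ne (Subsingleton.elim a b)
  refine ⟨?_⟩
  rintro (u | e) (v | f)
  · have h : u = v := Subsingleton.elim u v
    subst h; rfl
  · exact (hempty f).elim
  · exact (hempty e).elim
  · exact (hempty e).elim

lemma crossing {W : Type*} {H : SimpleGraph W} {S : Set W} :
    ∀ {i j : W}, H.Walk i j → i ∈ S → j ∉ S → ∃ a ∈ S, ∃ b, b ∉ S ∧ H.Adj a b := by
  intro i j p
  induction p with
  | nil => intro h h'; exact absurd h h'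
  | @cons a b c h p ih =>
    intro ha hc
    by_cases hb : b ∈ S
    · exact ih hb hc
    · exact ⟨a, ha, b, hb, h⟩

lemma irreducible_of_connected (hE : (eccGraph (centralGraph G)).Connected)
    (hH : (centralGraph G).Connected) :
    IsIrreducible (eccMatR (centralGraph G)) := by
  rintro ⟨S, ⟨i0, hi0⟩, hSne, hzero⟩
  obtain ⟨j0, hj0⟩ : ∃ j, j ∉ S := by
    by_contra h; push_neg at h; exact hSne (Set.eq_univ_of_forall h)
  obtain ⟨p⟩ := hE i0 j0
  obtain ⟨a, ha, b, hb, hadj⟩ := crossing p hi0 hj0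
  have h0 := hzero a ha b hb
  simp only [eccMatR, if_pos hadj.2] at h0
  have hpos := hH.pos_dist_of_ne hadj.1
  exact (Nat.cast_pos.mpr hpos).ne' h0

end Aux

/-- for connected triangle-free G, the eccentric graph of C[G] is connected,
equivalently the eccentricity matrix of C[G] is irreducible. -/
theorem stmt_3 {V : Type*} [Fintype V] [DecidableEq V] (G : SimpleGraph V) [DecidableRel G.Adj]
    (hconn : G.Connected) (htf : G.CliqueFree 3) :
    (eccGraph (centralGraph G)).Connected ∧ IsIrreducible (eccMatR (centralGraph G)) := by
  rcases subsingleton_or_nontrivial V with h | h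
  · have hE := eccG_connected_of_subsingleton hconn
    exact ⟨hE, irreducible_of_connected hE (cg_connected hconn)⟩
  · have hE := eccG_connected_of_nontrivial hconn htf
    exact ⟨hE, irreducible_of_connected hE (cg_connected hconn)⟩
end EccPaper
end

section
/- Let G be a connected graph on p vertices and q edges of diameter 2 that is not self-centered, and let l be the number of vertices of eccentricity 1. Then the eccentricity Wiener index of G equals p(p-1) - 2q + (l/2)(2p - l - 1). -/
open Finset

namespace EccPaper

variable {V : Type*}

/-- for a non-self-centered graph of diameter 2 with l vertices of
eccentricity 1, W_ε(G) = p(p-1) - 2q + (l/2)(2p - l - 1). -/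
theorem stmt_6 {V : Type*} [Fintype V] [DecidableEq V] (G : SimpleGraph V) [DecidableRel G.Adj]
    (hconn : G.Connected) (hd : graphDiam G = 2)
    (hns : ¬ ∀ v : V, ecc G v = graphDiam G) :
    eccWiener G = (Fintype.card V : ℝ) * ((Fintype.card V : ℝ) - 1) - 2 * (G.edgeFinset.card : ℝ) +
      ((Finset.univ.filter (fun v : V => ecc G v = 1)).card : ℝ) / 2 *
        (2 * (Fintype.card V : ℝ) - ((Finset.univ.filter (fun v : V => ecc G v = 1)).card : ℝ) - 1) := by
  classical
  have hne : Nonempty V := by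
    by_contra h
    rw [not_nonempty_iff] at h
    rw [graphDiam, Finset.univ_eq_empty] at hd
    simp at hd
  have hecc_le : ∀ v, ecc G v ≤ 2 := fun v => hd ▸ Finset.le_sup (Finset.mem_univ v)
  have hdist_le : ∀ u v, G.dist u v ≤ ecc G u := fun u v => Finset.le_sup (Finset.mem_univ v)
  -- nontrivial
  obtain ⟨w, -, hw⟩ := Finset.exists_mem_eq_sup (univ : Finset V) univ_nonempty
    (fun v => ecc G v)
  have hw2 : ecc G w = 2 := by rw [graphDiam] at hd; omega
  obtain ⟨u0, -, hu0⟩ := Finset.exists_mem_eq_sup (univ : Finset V) univ_nonempty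
    (fun u => G.dist w u)
  have hdw : G.dist w u0 = 2 := by rw [ecc] at hw2; omega
  have hnontriv : Nontrivial V := by
    refine ⟨w, u0, fun h => ?_⟩
    rw [← h, SimpleGraph.dist_self] at hdw; omega
  have hecc_pos : ∀ v, 1 ≤ ecc G v := by
    intro v
    obtain ⟨u, hu⟩ := exists_ne v
    have := hconn.pos_dist_of_ne (Ne.symm hu)
    have := hdist_le v u
    omega
  have hadj_of_ecc1 : ∀ u v : V, ecc G u = 1 → u ≠ v → G.Adj u v := by
    intro u v h1 hne'
    have h2 := hdist_le u v
    have h3 := hconn.pos_dist_of_ne hne'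
    rw [← SimpleGraph.dist_eq_one_iff_adj]
    omega
  -- pointwise formula
  have key : ∀ u v : V, eccMatR G u v =
      3 - 2 * (if G.Adj u v then (1:ℝ) else 0) - 2 * (if u = v then (1:ℝ) else 0)
        - (if u = v then (1:ℝ) else 0) * (if ecc G u = 1 then (1:ℝ) else 0)
        - (1 - (if ecc G u = 1 then (1:ℝ) else 0)) * (1 - (if ecc G v = 1 then (1:ℝ) else 0)) := by
    intro u v
    by_cases huv : u = v
    · subst huv
      have h0 : eccMatR G u u = 0 := by
        rw [eccMatR]
        split <;> simp [SimpleGraph.dist_self]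
      rw [h0]
      by_cases h1 : ecc G u = 1 <;>
        simp [h1, G.irrefl] <;> ring
    · by_cases h1 : ecc G u = 1 ∨ ecc G v = 1
      · have hadj : G.Adj u v := by
          rcases h1 with h1 | h1
          · exact hadj_of_ecc1 u v h1 huv
          · exact (hadj_of_ecc1 v u h1 (Ne.symm huv)).symm
        have hdist : G.dist u v = 1 := SimpleGraph.dist_eq_one_iff_adj.mpr hadj
        have hmin : min (ecc G u) (ecc G v) = 1 := by
          have := hecc_pos u; have := hecc_pos v
          rcases h1 with h1 | h1 <;> omega
        have h0 : eccMatR G u v = 1 := by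
          rw [eccMatR, hmin, hdist]; simp
        rw [h0]
        rcases h1 with h1 | h1 <;> simp [h1, hadj, huv] <;> ring
      · push_neg at h1
        obtain ⟨h1u, h1v⟩ := h1
        have h2u : ecc G u = 2 := by have := hecc_le u; have := hecc_pos u; omega
        have h2v : ecc G v = 2 := by have := hecc_le v; have := hecc_pos v; omega
        have hmin : min (ecc G u) (ecc G v) = 2 := by omega
        by_cases hadj : G.Adj u v
        · have hdist : G.dist u v = 1 := SimpleGraph.dist_eq_one_iff_adj.mpr hadj
          have h0 : eccMatR G u v = 0 := by rw [eccMatR, hmin, hdist]; simp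
          rw [h0]; simp [h1u, h1v, hadj, huv]; ring
        · have hdist : G.dist u v = 2 := by
            have := hdist_le u v
            have h3 := hconn.pos_dist_of_ne huv
            have h4 : G.dist u v ≠ 1 := fun h => hadj (SimpleGraph.dist_eq_one_iff_adj.mp h)
            omega
          have h0 : eccMatR G u v = 2 := by rw [eccMatR, hmin, hdist]; simp
          rw [h0]; simp [h1u, h1v, hadj, huv]; ring
  -- sums
  set p : ℝ := (Fintype.card V : ℝ) with hp
  set l : ℝ := ((Finset.univ.filter (fun v : V => ecc G v = 1)).card : ℝ) with hl
  set q : ℝ := (G.edgeFinset.card : ℝ) with hq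
  have hsum_adj : ∑ u : V, ∑ v : V, (if G.Adj u v then (1:ℝ) else 0) = 2 * q := by
    have : ∀ u : V, ∑ v : V, (if G.Adj u v then (1:ℝ) else 0) = (G.degree u : ℝ) := by
      intro u
      rw [← SimpleGraph.card_neighborFinset_eq_degree, SimpleGraph.neighborFinset_eq_filter]
      rw [Finset.sum_boole]
    simp_rw [this]
    rw [hq]
    rw_mod_cast [SimpleGraph.sum_degrees_eq_twice_card_edges]
  have hsum_diag : ∑ u : V, ∑ v : V, (if u = v then (1:ℝ) else 0) = p := by
    simp [Finset.sum_ite_eq, hp, Finset.card_univ]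
  have hsum_alpha : ∑ u : V, (if ecc G u = 1 then (1:ℝ) else 0) = l := by
    rw [Finset.sum_boole, hl]
  have hsum_diag_alpha : ∑ u : V, ∑ v : V,
      (if u = v then (1:ℝ) else 0) * (if ecc G u = 1 then (1:ℝ) else 0) = l := by
    have : ∀ u : V, ∑ v : V, (if u = v then (1:ℝ) else 0) * (if ecc G u = 1 then (1:ℝ) else 0)
        = (if ecc G u = 1 then (1:ℝ) else 0) := by
      intro u
      rw [← Finset.sum_mul, Finset.sum_ite_eq univ u (fun _ => (1:ℝ))]
      simp
    simp_rw [this]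
    exact hsum_alpha
  have hsum_prod : ∑ u : V, ∑ v : V,
      (1 - (if ecc G u = 1 then (1:ℝ) else 0)) * (1 - (if ecc G v = 1 then (1:ℝ) else 0))
      = (p - l) * (p - l) := by
    rw [← Finset.sum_mul_sum]
    have : ∑ u : V, (1 - (if ecc G u = 1 then (1:ℝ) else 0)) = p - l := by
      rw [Finset.sum_sub_distrib, hsum_alpha]
      simp [hp, Finset.card_univ]
    rw [this]
  have h3 : ∑ u : V, ∑ v : V, (3:ℝ) = 3 * p * p := by
    simp [hp, Finset.card_univ]; ring
  have hsplit : (∑ u, ∑ v, eccMatR G u v)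
      = (∑ u : V, ∑ v : V, (3:ℝ))
        - 2 * (∑ u : V, ∑ v : V, (if G.Adj u v then (1:ℝ) else 0))
        - 2 * (∑ u : V, ∑ v : V, (if u = v then (1:ℝ) else 0))
        - (∑ u : V, ∑ v : V,
            (if u = v then (1:ℝ) else 0) * (if ecc G u = 1 then (1:ℝ) else 0))
        - (∑ u : V, ∑ v : V,
            (1 - (if ecc G u = 1 then (1:ℝ) else 0)) * (1 - (if ecc G v = 1 then (1:ℝ) else 0))) := by
    simp_rw [key]
    simp only [Finset.sum_sub_distrib, Finset.mul_sum]
  rw [eccWiener, hsplit, hsum_adj, hsum_diag, hsum_diag_alpha, hsum_prod, h3]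
  ring
end EccPaper
end

section
/- For every connected graph G, the eccentricity Wiener index satisfies W_ε(G) ≥ ε*(G)/2, where ε*(G) is the total eccentricity of G. Moreover, equality holds if G is an even cycle. -/
open Finset

namespace EccPaper

variable {V : Type*}

section AuxLemmas

open Fin.CommRing

lemma one_mod_eq {n : ℕ} (hn : 2 ≤ n) : (n + 1) % n = 1 := by
  rw [Nat.add_mod_left, Nat.mod_eq_of_lt (by omega)]

lemma val_one' {n : ℕ} (hn : 2 ≤ n) [NeZero n] : (1 : Fin n).val = 1 := by
  rw [Fin.val_one', Nat.mod_eq_of_lt (by omega)]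

lemma cycle_dist_le {n : ℕ} (hn : 2 ≤ n) (u : Fin n) (k : ℕ) (hk : k < n) :
    (SimpleGraph.cycleGraph n).dist u (u + ⟨k, hk⟩) ≤ k := by
  haveI : NeZero n := ⟨by omega⟩
  induction k with
  | zero =>
    have h0 : (⟨0, hk⟩ : Fin n) = 0 := rfl
    simp [h0, SimpleGraph.dist_self]
  | succ k ih =>
    have hk' : k < n := Nat.lt_of_succ_lt hk
    have hsub : (u + ⟨k+1, hk⟩ : Fin n) - (u + ⟨k, hk'⟩) = 1 := by
      have h : (u + ⟨k+1, hk⟩ : Fin n) - (u + ⟨k, hk'⟩) = (⟨k+1, hk⟩ : Fin n) - ⟨k, hk'⟩ := by ring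
      rw [h]
      ext
      rw [Fin.sub_def]
      simp only [val_one' hn]
      have h2 : n - k + (k+1) = n + 1 := by omega
      simp only [h2, one_mod_eq hn]
    have hadj : (SimpleGraph.cycleGraph n).Adj (u + ⟨k, hk'⟩) (u + ⟨k+1, hk⟩) := by
      rw [SimpleGraph.cycleGraph_adj']
      right
      rw [hsub, val_one' hn]
    have htri : (SimpleGraph.cycleGraph n).dist u (u + ⟨k+1, hk⟩)
        ≤ (SimpleGraph.cycleGraph n).dist u (u + ⟨k, hk'⟩)
          + (SimpleGraph.cycleGraph n).dist (u + ⟨k, hk'⟩) (u + ⟨k+1, hk⟩) := by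
      rcases n with _|n
      · omega
      · exact SimpleGraph.cycleGraph_connected.dist_triangle
    have h1 : (SimpleGraph.cycleGraph n).dist (u + ⟨k, hk'⟩) (u + ⟨k+1, hk⟩) ≤ 1 := by
      have := SimpleGraph.dist_le hadj.toWalk
      simpa using this
    have := ih hk'
    omega

/-- circular distance function -/
def cf (n : ℕ) (x : Fin n) : ℕ := min x.val (n - x.val)

lemma cf_add_one {n : ℕ} (hn : 2 ≤ n) [NeZero n] (x : Fin n) : cf n (x + 1) ≤ cf n x + 1 := by
  have hx : x.val < n := x.isLt
  have hv : (x + 1 : Fin n).val = (x.val + 1) % n := by rw [Fin.add_def, val_one' hn]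
  unfold cf
  rw [hv]
  rcases Nat.lt_or_ge (x.val + 1) n with h | h
  · rw [Nat.mod_eq_of_lt h]; omega
  · have he : x.val + 1 = n := by omega
    rw [he, Nat.mod_self]; omega

lemma cf_sub_one {n : ℕ} (hn : 2 ≤ n) [NeZero n] (x : Fin n) : cf n (x - 1) ≤ cf n x + 1 := by
  have hx : x.val < n := x.isLt
  have hv : (x - 1 : Fin n).val = (n - 1 + x.val) % n := by rw [Fin.sub_def, val_one' hn]
  unfold cf
  rw [hv]
  rcases Nat.eq_zero_or_pos x.val with h | h
  · rw [h]
    have h3 : (n - 1 + 0) % n = n - 1 := by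
      rw [Nat.add_zero, Nat.mod_eq_of_lt (by omega)]
    rw [h3]; omega
  · have h3 : (n - 1 + x.val) % n = x.val - 1 := by
      have h2 : n - 1 + x.val = n + (x.val - 1) := by omega
      rw [h2, Nat.add_mod_left, Nat.mod_eq_of_lt (by omega)]
    rw [h3]; omega

lemma cf_walk {n : ℕ} (hn : 2 ≤ n) {u v : Fin n} (p : (SimpleGraph.cycleGraph n).Walk u v) :
    cf n (v - u) ≤ p.length := by
  haveI : NeZero n := ⟨by omega⟩
  induction p with
  | nil =>
    rename_i w
    have : w - w = 0 := sub_self w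
    simp [cf, this]
  | @cons a b c hadj p ih =>
    rw [SimpleGraph.cycleGraph_adj'] at hadj
    rcases hadj with h | h
    · have hb : a - b = 1 := by ext; rw [val_one' hn]; exact h
      have hca : c - a = (c - b) - 1 := by
        have hb' : b = a - 1 := by
          have := sub_eq_iff_eq_add.mp hb
          rw [this]; ring
        rw [hb']; ring
      rw [hca, SimpleGraph.Walk.length_cons]
      have := cf_sub_one hn (c - b)
      omega
    · have hb : b - a = 1 := by ext; rw [val_one' hn]; exact h
      have hca : c - a = (c - b) + 1 := by
        have hb' : b = a + 1 := by
          have := sub_eq_iff_eq_add.mp hb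
          rw [this]; ring
        rw [hb']; ring
      rw [hca, SimpleGraph.Walk.length_cons]
      have := cf_add_one hn (c - b)
      omega

lemma cycle_dist {n : ℕ} (hn : 2 ≤ n) (u v : Fin n) :
    (SimpleGraph.cycleGraph n).dist u v = cf n (v - u) := by
  haveI : NeZero n := ⟨by omega⟩
  apply le_antisymm
  · rcases Nat.eq_zero_or_pos (v - u).val with h0 | h0
    · have hvu : v - u = 0 := by ext; simpa using h0
      have hv : v = u := sub_eq_zero.mp hvu
      subst hv
      simp [cf, hvu, SimpleGraph.dist_self]
    · have hk : (v - u).val < n := (v - u).isLt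
      have huv : (u - v).val = n - (v - u).val := by
        have hneg : u - v = -(v - u) := by ring
        rw [hneg, Fin.neg_def]
        show (n - (v - u).val) % n = n - (v - u).val
        rw [Nat.mod_eq_of_lt (by omega)]
      rcases Nat.le_total (v - u).val (n - (v - u).val) with h | h
      · have hv : v = u + ⟨(v - u).val, hk⟩ := by
          have h5 : (⟨(v - u).val, hk⟩ : Fin n) = v - u := rfl
          rw [h5]; ring
        calc (SimpleGraph.cycleGraph n).dist u v
            = (SimpleGraph.cycleGraph n).dist u (u + ⟨(v-u).val, hk⟩) := by rw [← hv]
          _ ≤ (v - u).val := cycle_dist_le hn u _ hk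
          _ = cf n (v - u) := by unfold cf; omega
      · have hk2 : (u - v).val < n := (u - v).isLt
        have hu : u = v + ⟨(u - v).val, hk2⟩ := by
          have h5 : (⟨(u - v).val, hk2⟩ : Fin n) = u - v := rfl
          rw [h5]; ring
        calc (SimpleGraph.cycleGraph n).dist u v
            = (SimpleGraph.cycleGraph n).dist v (v + ⟨(u-v).val, hk2⟩) := by
              rw [← hu, SimpleGraph.dist_comm]
          _ ≤ (u - v).val := cycle_dist_le hn v _ hk2
          _ = cf n (v - u) := by unfold cf; omega
  · obtain ⟨p, hp⟩ : ∃ p : (SimpleGraph.cycleGraph n).Walk u v,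
        p.length = (SimpleGraph.cycleGraph n).dist u v := by
      rcases n with _|n
      · omega
      · exact SimpleGraph.cycleGraph_connected.exists_walk_length_eq_dist u v
    rw [← hp]
    exact cf_walk hn p

lemma iso_dist {W : Type*} {G : SimpleGraph V} {H : SimpleGraph W} (e : G ≃g H) (u v : V) :
    H.dist (e u) (e v) = G.dist u v := by
  by_cases hr : G.Reachable u v
  · apply le_antisymm
    · obtain ⟨p, hp⟩ := hr.exists_walk_length_eq_dist
      calc H.dist (e u) (e v) ≤ (p.map e.toHom).length := SimpleGraph.dist_le _
        _ = G.dist u v := by rw [SimpleGraph.Walk.length_map, hp]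
    · have hr' : H.Reachable (e u) (e v) := hr.map e.toHom
      obtain ⟨p, hp⟩ := hr'.exists_walk_length_eq_dist
      have h := SimpleGraph.dist_le
        ((p.map e.symm.toHom).copy (e.symm_apply_apply u) (e.symm_apply_apply v))
      simpa [hp] using h
  · have hr' : ¬ H.Reachable (e u) (e v) := fun h =>
      hr (by simpa using h.map e.symm.toHom)
    rw [SimpleGraph.dist_eq_zero_of_not_reachable hr,
      SimpleGraph.dist_eq_zero_of_not_reachable hr']

lemma iso_ecc {W : Type*} [Fintype V] [Fintype W] {G : SimpleGraph V} {H : SimpleGraph W}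
    (e : G ≃g H) (v : V) : ecc H (e v) = ecc G v := by
  apply le_antisymm
  · apply Finset.sup_le
    intro w _
    have h : H.dist (e v) w = G.dist v (e.symm w) := by
      rw [← iso_dist e v (e.symm w)]; simp
    rw [h]
    exact Finset.le_sup (Finset.mem_univ _)
  · apply Finset.sup_le
    intro u _
    rw [← iso_dist e v u]
    exact Finset.le_sup (Finset.mem_univ _)

lemma cycle_ecc {m : ℕ} (hm : 1 ≤ m) (u : Fin (m + m)) :
    ecc (SimpleGraph.cycleGraph (m + m)) u = m := by
  haveI : NeZero (m + m) := ⟨by omega⟩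
  have hn : 2 ≤ m + m := by omega
  apply le_antisymm
  · apply Finset.sup_le
    intro v _
    rw [cycle_dist hn]
    have := (v - u).isLt
    unfold cf
    omega
  · have hmlt : m < m + m := by omega
    have hd : (SimpleGraph.cycleGraph (m + m)).dist u (u + ⟨m, hmlt⟩) = m := by
      rw [cycle_dist hn]
      have hc : (u + ⟨m, hmlt⟩ : Fin (m+m)) - u = ⟨m, hmlt⟩ := by ring
      rw [hc]
      show min m (m + m - m) = m
      omega
    calc m = (SimpleGraph.cycleGraph (m+m)).dist u (u + ⟨m, hmlt⟩) := hd.symm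
      _ ≤ ecc (SimpleGraph.cycleGraph (m+m)) u := Finset.le_sup (Finset.mem_univ _)

lemma cycle_dist_eq_m_iff {m : ℕ} (hm : 1 ≤ m) (u v : Fin (m + m)) :
    (SimpleGraph.cycleGraph (m + m)).dist u v = m ↔ v = u + ⟨m, by omega⟩ := by
  haveI : NeZero (m + m) := ⟨by omega⟩
  have hn : 2 ≤ m + m := by omega
  rw [cycle_dist hn]
  constructor
  · intro h
    have hlt := (v - u).isLt
    have hval : (v - u).val = m := by
      unfold cf at h; omega
    have hvu : v - u = ⟨m, by omega⟩ := by ext; exact hval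
    have hv : v = u + (v - u) := by ring
    rw [hv, hvu]
  · intro h
    subst h
    have hc : (u + ⟨m, by omega⟩ : Fin (m+m)) - u = ⟨m, by omega⟩ := by ring
    rw [hc]
    show min m (m + m - m) = m
    omega

end AuxLemmas

/-- W_ε(G) ≥ ε*(G)/2, with equality if G is an even cycle. -/
theorem stmt_9 {V : Type*} [Fintype V] (G : SimpleGraph V) (hconn : G.Connected) :
    totalEcc G / 2 ≤ eccWiener G ∧
    ((∃ n : ℕ, Even n ∧ Nonempty (G ≃g SimpleGraph.cycleGraph n)) →
      eccWiener G = totalEcc G / 2) := by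
  haveI : Nonempty V := hconn.nonempty
  have hnonneg : ∀ u v : V, 0 ≤ eccMatR G u v := by
    intro u v
    unfold eccMatR
    split
    · positivity
    · exact le_refl 0
  have hkey : ∀ u : V, (ecc G u : ℝ) ≤ ∑ v, eccMatR G u v := by
    intro u
    obtain ⟨v₀, -, hv₀⟩ := Finset.exists_mem_eq_sup Finset.univ Finset.univ_nonempty
      (fun v => G.dist u v)
    have h1 : G.dist u v₀ = ecc G u := hv₀.symm
    have h2 : ecc G u ≤ ecc G v₀ := by
      rw [← h1, SimpleGraph.dist_comm]
      exact Finset.le_sup (Finset.mem_univ _)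
    have hM : eccMatR G u v₀ = (ecc G u : ℝ) := by
      unfold eccMatR
      rw [min_eq_left h2, if_pos h1, h1]
    rw [← hM]
    exact Finset.single_le_sum (fun v _ => hnonneg u v) (Finset.mem_univ v₀)
  have hineq : totalEcc G ≤ ∑ u, ∑ v, eccMatR G u v :=
    Finset.sum_le_sum (fun u _ => hkey u)
  constructor
  · unfold eccWiener
    linarith
  · rintro ⟨n, hne, ⟨e⟩⟩
    have hn0 : n ≠ 0 := by
      rintro rfl
      exact (e.toEquiv (Classical.arbitrary V)).elim0
    obtain ⟨m, hm⟩ := hne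
    subst hm
    have hm1 : 1 ≤ m := by omega
    set H := SimpleGraph.cycleGraph (m + m) with hH
    have hEcc : ∀ w : Fin (m + m), ecc H w = m := fun w => cycle_ecc hm1 w
    have hMt : ∀ u v : V, eccMatR G u v = eccMatR H (e u) (e v) := by
      intro u v
      unfold eccMatR
      rw [iso_dist, iso_ecc, iso_ecc]
    have hinner : ∀ u' : Fin (m + m), ∑ v', eccMatR H u' v' = (m : ℝ) := by
      intro u'
      have hstep : ∑ v', eccMatR H u' v'
          = ∑ v', (if v' = u' + ⟨m, by omega⟩ then (m : ℝ) else 0) := by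
        apply Finset.sum_congr rfl
        intro v' _
        unfold eccMatR
        rw [hEcc u', hEcc v', min_self]
        by_cases h : H.dist u' v' = m
        · rw [if_pos h, h, if_pos ((cycle_dist_eq_m_iff hm1 u' v').mp h)]
        · rw [if_neg h, if_neg (fun hv => h ((cycle_dist_eq_m_iff hm1 u' v').mpr hv))]
      rw [hstep, Finset.sum_ite_eq' Finset.univ (u' + ⟨m, by omega⟩) (fun _ => (m : ℝ))]
      simp
    have hsum : ∑ u, ∑ v, eccMatR G u v = totalEcc G := by
      have hL : ∑ u, ∑ v, eccMatR G u v = ∑ u' : Fin (m + m), ∑ v' : Fin (m + m), eccMatR H u' v' := by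
        refine Fintype.sum_equiv e.toEquiv _ _ (fun u => ?_)
        refine Fintype.sum_equiv e.toEquiv _ _ (fun v => ?_)
        exact hMt u v
      have hR : totalEcc G = ∑ w : Fin (m + m), (ecc H w : ℝ) := by
        unfold totalEcc
        refine Fintype.sum_equiv e.toEquiv _ _ (fun v => ?_)
        exact congrArg (fun k : ℕ => (k : ℝ)) (iso_ecc e v).symm
      rw [hL, hR]
      apply Finset.sum_congr rfl
      intro u' _
      rw [hinner u', hEcc u']
    unfold eccWiener
    rw [hsum]

end EccPaper
end

section
/- Let G be a connected graph on p vertices with every vertex of eccentricity greater than 1, and suppose the complement Ḡ is also connected. Then W_ε(G) + W_ε(Ḡ) ≤ (1/2)·((p-1)(ε*(G) + ε*(Ḡ)) − (ζ(G) + ζ(Ḡ))). -/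
open Finset

namespace EccPaper

variable {V : Type*}

lemma row_bound [Fintype V] [DecidableEq V] (G : SimpleGraph V) [DecidableRel G.Adj]
    (hecc : ∀ v : V, 1 < ecc G v) (u : V) :
    ∑ v, eccMatR G u v ≤
      ((Fintype.card V : ℝ) - 1 - G.degree u) * (ecc G u : ℝ) := by
  set S : Finset V := univ \ insert u (G.neighborFinset u) with hS
  have hcard : (S.card : ℝ) = (Fintype.card V : ℝ) - 1 - G.degree u := by
    have h1 : (insert u (G.neighborFinset u)).card = G.degree u + 1 := by
      rw [Finset.card_insert_of_notMem (by simp)]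
      rfl
    have h2 : S.card = Fintype.card V - (G.degree u + 1) := by
      rw [hS, Finset.card_sdiff_of_subset (Finset.subset_univ _), h1, Finset.card_univ]
    have h3 : G.degree u + 1 ≤ Fintype.card V := by
      rw [← h1]; exact Finset.card_le_univ _
    rw [h2, Nat.cast_sub h3]; push_cast; ring
  calc ∑ v, eccMatR G u v ≤ ∑ v, (if v ∈ S then (ecc G u : ℝ) else 0) := by
        apply Finset.sum_le_sum
        intro v _
        unfold eccMatR
        split_ifs with h1 h2 h2
        · exact_mod_cast h1 ▸ min_le_left _ _
        · exfalso
          simp only [hS, Finset.mem_sdiff, Finset.mem_univ, true_and, Finset.mem_insert,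
            SimpleGraph.mem_neighborFinset] at h2
          push_neg at h2
          have hmin : 1 < min (ecc G u) (ecc G v) := lt_min (hecc u) (hecc v)
          rcases h2 with (rfl | hadj)
          · rw [SimpleGraph.dist_self] at h1; omega
          · rw [SimpleGraph.dist_eq_one_iff_adj.mpr hadj] at h1; omega
        · exact_mod_cast Nat.cast_nonneg _
        · exact le_rfl
      _ = (S.card : ℝ) * (ecc G u : ℝ) := by
        rw [Finset.sum_ite_mem, Finset.univ_inter, Finset.sum_const, nsmul_eq_mul]
      _ = _ := by rw [hcard]

lemma ecc_compl_gt_one [Fintype V] [DecidableEq V] (G : SimpleGraph V)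
    (hconn : G.Connected) (hecc : ∀ v : V, 1 < ecc G v) (hcc : Gᶜ.Connected) (v : V) :
    1 < ecc Gᶜ v := by
  obtain ⟨u, -, hu⟩ := Finset.lt_sup_iff.mp (hecc v)
  obtain ⟨w⟩ := hconn v u
  have hex : ∃ b : V, G.Adj v b := by
    cases w with
    | nil => exact absurd hu (by simp [SimpleGraph.dist_self])
    | @cons _ b _ h p => exact ⟨b, h⟩
  obtain ⟨b, hb⟩ := hex
  have hnadj : ¬ Gᶜ.Adj v b := by simp [SimpleGraph.compl_adj, hb]
  have hpos : 0 < Gᶜ.dist v b := hcc.pos_dist_of_ne hb.ne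
  have hne1 : Gᶜ.dist v b ≠ 1 := fun h1 => hnadj (SimpleGraph.dist_eq_one_iff_adj.mp h1)
  calc 1 < Gᶜ.dist v b := by omega
    _ ≤ ecc Gᶜ v := Finset.le_sup (Finset.mem_univ b)

lemma eccWiener_bound [Fintype V] [DecidableEq V] (G : SimpleGraph V) [DecidableRel G.Adj]
    (hecc : ∀ v : V, 1 < ecc G v) :
    eccWiener G ≤ (((Fintype.card V : ℝ) - 1) * totalEcc G - eccConnIndex G) / 2 := by
  have h1 : ∑ u, ∑ v, eccMatR G u v ≤
      ∑ u, ((Fintype.card V : ℝ) - 1 - G.degree u) * (ecc G u : ℝ) :=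
    Finset.sum_le_sum fun u _ => row_bound G hecc u
  have heq : ∑ u, ((Fintype.card V : ℝ) - 1 - G.degree u) * (ecc G u : ℝ) =
      ((Fintype.card V : ℝ) - 1) * totalEcc G - eccConnIndex G := by
    unfold totalEcc eccConnIndex
    rw [Finset.mul_sum, ← Finset.sum_sub_distrib]
    exact Finset.sum_congr rfl fun u _ => by ring
  rw [heq] at h1
  unfold eccWiener
  linarith

/-- Nordhaus–Gaddum type bound for the eccentricity Wiener index. -/
theorem stmt_11 {V : Type*} [Fintype V] [DecidableEq V] (G : SimpleGraph V) [DecidableRel G.Adj]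
    (hconn : G.Connected) (hecc : ∀ v : V, 1 < ecc G v) (hcc : Gᶜ.Connected) :
    eccWiener G + eccWiener Gᶜ ≤
      (((Fintype.card V : ℝ) - 1) * (totalEcc G + totalEcc Gᶜ) -
        (eccConnIndex G + eccConnIndex Gᶜ)) / 2 := by
  have h1 := eccWiener_bound G hecc
  have h2 := eccWiener_bound Gᶜ (ecc_compl_gt_one G hconn hecc hcc)
  linarith
end EccPaper
end

section
/- Let G be a self-centered connected graph on p vertices with diameter d. Then E_ε(G) ≤ 2W_ε(G)/p + sqrt(2(p−1)·W_ε(G)·(d − 2W_ε(G)/p²)), where E_ε(G) is the eccentricity energy. -/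
open Finset

namespace EccPaper

variable {V : Type*}

section Aux

open Matrix in
lemma km_sum_sq_eig [Fintype V] [DecidableEq V] (A : Matrix V V ℝ) (hA : A.IsHermitian) :
    ∑ i, hA.eigenvalues i ^ 2 = Matrix.trace (A * A) := by
  have hU' : star (hA.eigenvectorUnitary : Matrix V V ℝ) * (hA.eigenvectorUnitary : Matrix V V ℝ) = 1 :=
    Unitary.coe_star_mul_self _
  conv_rhs => rw [hA.spectral_theorem, Unitary.conjStarAlgAut_apply]
  set U := (hA.eigenvectorUnitary : Matrix V V ℝ)
  set D : Matrix V V ℝ := Matrix.diagonal (RCLike.ofReal ∘ hA.eigenvalues) with hD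
  have key : (U * D * star U) * (U * D * star U) = U * (D * D) * star U := by
    simp only [mul_assoc]
    rw [← mul_assoc (star U) U, hU', one_mul]
  rw [key, Matrix.trace_mul_cycle, hU', one_mul]
  simp [hD, Matrix.diagonal_mul_diagonal, Matrix.trace_diagonal, sq]

open Matrix in
lemma km_rayleigh_bound [Fintype V] [DecidableEq V] (A : Matrix V V ℝ) (hA : A.IsHermitian)
    (x : V → ℝ) (t : ℝ) (ht : ∀ i, hA.eigenvalues i ≤ t) :
    x ⬝ᵥ (A *ᵥ x) ≤ t * (x ⬝ᵥ x) := by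
  have hU : (hA.eigenvectorUnitary : Matrix V V ℝ) * star (hA.eigenvectorUnitary : Matrix V V ℝ) = 1 :=
    Unitary.coe_mul_star_self _
  set U := (hA.eigenvectorUnitary : Matrix V V ℝ) with hUdef
  set c : V → ℝ := star U *ᵥ x with hc
  have hxU : x ᵥ* U = c := by
    rw [hc, Matrix.star_eq_conjTranspose, Matrix.conjTranspose_eq_transpose_of_trivial,
      Matrix.mulVec_transpose]
  have h1 : x ⬝ᵥ (A *ᵥ x) = ∑ i, hA.eigenvalues i * c i ^ 2 := by
    conv_lhs => rw [hA.spectral_theorem, Unitary.conjStarAlgAut_apply]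
    rw [← Matrix.mulVec_mulVec, ← Matrix.mulVec_mulVec, Matrix.dotProduct_mulVec, hxU]
    simp only [← hUdef, ← hc]
    simp [Matrix.mulVec_diagonal, dotProduct, Function.comp, sq]
    ring_nf
    exact Finset.sum_congr rfl fun i _ => by ring
  have h2 : ∑ i, c i ^ 2 = x ⬝ᵥ x := by
    have hstar : star U = Uᵀ := by
      rw [Matrix.star_eq_conjTranspose, Matrix.conjTranspose_eq_transpose_of_trivial]
    have hUT : U * Uᵀ = 1 := by rw [← hstar]; exact hU
    have hcT : c = Uᵀ *ᵥ x := by rw [hc, hstar]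
    calc ∑ i, c i ^ 2 = c ⬝ᵥ c := by simp [dotProduct, sq]
      _ = (Uᵀ *ᵥ x) ⬝ᵥ (Uᵀ *ᵥ x) := by rw [hcT]
      _ = ((Uᵀ *ᵥ x) ᵥ* Uᵀ) ⬝ᵥ x := Matrix.dotProduct_mulVec _ _ _
      _ = (U *ᵥ (Uᵀ *ᵥ x)) ⬝ᵥ x := by rw [← Matrix.mulVec_transpose, Matrix.transpose_transpose]
      _ = x ⬝ᵥ x := by rw [Matrix.mulVec_mulVec, hUT, Matrix.one_mulVec]
  rw [h1, ← h2, Finset.mul_sum]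
  apply Finset.sum_le_sum
  intro i _
  exact mul_le_mul_of_nonneg_right (ht i) (sq_nonneg _)

lemma km_mono {p S a b : ℝ} (hp : p = 1 ∨ 2 ≤ p) (hb : 0 ≤ b) (hba : b ≤ a)
    (haS : a ^ 2 ≤ S) (hSp : S ≤ p * b ^ 2) :
    a + Real.sqrt ((p - 1) * (S - a ^ 2)) ≤ b + Real.sqrt ((p - 1) * (S - b ^ 2)) := by
  rcases hp with hp | hp
  · subst hp
    have hab : a = b := le_antisymm (by nlinarith [sq_nonneg (a - b), sq_nonneg (a + b)]) hba
    simp [hab]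
  · have hp1 : (1 : ℝ) ≤ p - 1 := by linarith
    have hSb : b ^ 2 ≤ S := le_trans (by nlinarith) haS
    have hY0 : 0 ≤ (p - 1) * (S - a ^ 2) := by nlinarith
    set Ys := Real.sqrt ((p - 1) * (S - a ^ 2)) with hYs
    have hYs0 : 0 ≤ Ys := Real.sqrt_nonneg _
    have hYsq : Ys ^ 2 = (p - 1) * (S - a ^ 2) := Real.sq_sqrt hY0
    have hYle : Ys ≤ (p - 1) * b := by
      rw [hYs]
      have h0 : S - a ^ 2 ≤ (p - 1) * b ^ 2 := by nlinarith
      have h1 : (p - 1) * (S - a ^ 2) ≤ ((p - 1) * b) ^ 2 := by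
        nlinarith [mul_le_mul_of_nonneg_left h0 (by linarith : (0:ℝ) ≤ p - 1)]
      calc Real.sqrt ((p - 1) * (S - a ^ 2)) ≤ Real.sqrt (((p - 1) * b) ^ 2) :=
            Real.sqrt_le_sqrt h1
        _ = (p - 1) * b := Real.sqrt_sq (by nlinarith)
    have key : a - b + Ys ≤ Real.sqrt ((p - 1) * (S - b ^ 2)) := by
      apply Real.le_sqrt_of_sq_le
      nlinarith [mul_le_mul_of_nonneg_left hYle (sub_nonneg.2 hba),
        mul_nonneg (sq_nonneg (a - b)) (by linarith : (0:ℝ) ≤ p - 2)]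
    linarith

end Aux

/-- eccentricity energy bound for self-centered graphs. -/
theorem stmt_14 {V : Type*} [Fintype V] [DecidableEq V] (G : SimpleGraph V)
    (hconn : G.Connected) (hsc : ∀ v : V, ecc G v = graphDiam G) :
    eccEnergy G ≤ 2 * eccWiener G / (Fintype.card V : ℝ) +
      Real.sqrt (2 * ((Fintype.card V : ℝ) - 1) * eccWiener G *
        ((graphDiam G : ℝ) - 2 * eccWiener G / (Fintype.card V : ℝ) ^ 2)) := by
  classical
  haveI hne : Nonempty V := hconn.nonempty
  set M : Matrix V V ℝ := eccMatR G with hMdef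
  have hHerm : M.IsHermitian := eccMatR_isHermitian G
  set lam : V → ℝ := (eccMatR_isHermitian G).eigenvalues with hlamdef
  have hp0 : 0 < Fintype.card V := Fintype.card_pos
  have hp0' : (0:ℝ) < (Fintype.card V : ℝ) := by exact_mod_cast hp0
  have hentry : ∀ u v, M u v = if G.dist u v = graphDiam G then ((graphDiam G : ℕ) : ℝ) else 0 := by
    intro u v
    show eccMatR G u v = _
    simp only [eccMatR, hsc, min_self]
    split_ifs with h
    · exact_mod_cast congrArg (Nat.cast : ℕ → ℝ) h
    · rfl
  have hMnonneg : ∀ u v, 0 ≤ M u v := by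
    intro u v; rw [hentry]; split_ifs <;> positivity
  have hW2 : ∑ u, ∑ v, M u v = 2 * eccWiener G := by
    show _ = 2 * ((∑ u, ∑ v, eccMatR G u v) / 2)
    ring
  have hW0 : 0 ≤ eccWiener G := by
    rw [eccWiener]
    apply div_nonneg _ (by norm_num)
    exact Finset.sum_nonneg fun u _ => Finset.sum_nonneg fun v _ => hMnonneg u v
  have hrow : ∀ v, ((graphDiam G : ℕ) : ℝ) ≤ ∑ u, M v u := by
    intro v
    obtain ⟨u, -, hu⟩ := Finset.exists_mem_eq_sup (Finset.univ) Finset.univ_nonempty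
      (fun u => G.dist v u)
    have h2 : ecc G v = G.dist v u := hu
    have hdu : G.dist v u = graphDiam G := h2.symm.trans (hsc v)
    have hMu : M v u = ((graphDiam G : ℕ) : ℝ) := by rw [hentry]; simp [hdu]
    calc ((graphDiam G : ℕ) : ℝ) = M v u := hMu.symm
      _ ≤ ∑ u, M v u := Finset.single_le_sum (fun i _ => hMnonneg v i) (Finset.mem_univ u)
  have hpd : (Fintype.card V : ℝ) * (graphDiam G : ℝ) ≤ 2 * eccWiener G := by
    rw [← hW2]
    calc (Fintype.card V : ℝ) * (graphDiam G : ℝ) = ∑ _v : V, ((graphDiam G : ℕ) : ℝ) := by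
          simp [mul_comm]
      _ ≤ ∑ v, ∑ u, M v u := Finset.sum_le_sum fun v _ => hrow v
  have hS : ∑ i, lam i ^ 2 = 2 * (graphDiam G : ℝ) * eccWiener G := by
    rw [hlamdef, km_sum_sq_eig M hHerm]
    have htr : Matrix.trace (M * M) = ∑ u, ∑ v, M u v * M v u := by
      simp [Matrix.trace, Matrix.mul_apply, Matrix.diag]
    have hmul : ∀ u v, M u v * M v u = (graphDiam G : ℝ) * M u v := by
      intro u v
      have hsymm : M v u = M u v := by
        rw [hentry, hentry, SimpleGraph.dist_comm]
      rw [hsymm, hentry]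
      split_ifs with h
      · ring
      · ring
    rw [htr]
    simp_rw [hmul, ← Finset.mul_sum]
    rw [hW2]; ring
  obtain ⟨i0, -, hmax⟩ := Finset.exists_max_image Finset.univ (fun i => |lam i|)
    Finset.univ_nonempty
  have ha0 : (0:ℝ) ≤ |lam i0| := abs_nonneg _
  have hxx : dotProduct (fun _ : V => (1:ℝ)) (fun _ : V => (1:ℝ)) = (Fintype.card V : ℝ) := by
    simp [dotProduct]
  have hRay : 2 * eccWiener G ≤ |lam i0| * (Fintype.card V : ℝ) := by
    have hb := km_rayleigh_bound M hHerm (fun _ => 1) (|lam i0|)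
      (fun i => (le_abs_self _).trans (hmax i (Finset.mem_univ i)))
    have hx : dotProduct (fun _ : V => (1:ℝ)) (M.mulVec (fun _ => (1:ℝ))) = ∑ u, ∑ v, M u v := by
      simp [dotProduct, Matrix.mulVec]
    rw [hx, hW2, hxx] at hb
    exact hb
  have hb_le_a : 2 * eccWiener G / (Fintype.card V : ℝ) ≤ |lam i0| := by
    rw [div_le_iff₀ hp0']
    linarith [hRay]
  have hb0 : (0:ℝ) ≤ 2 * eccWiener G / (Fintype.card V : ℝ) :=
    div_nonneg (by linarith) (le_of_lt hp0')
  have haS : |lam i0| ^ 2 ≤ 2 * (graphDiam G : ℝ) * eccWiener G := by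
    rw [← hS, sq_abs]
    exact Finset.single_le_sum (f := fun i => lam i ^ 2) (fun i _ => sq_nonneg _)
      (Finset.mem_univ i0)
  have hcard_erase : ((Finset.univ.erase i0).card : ℝ) = (Fintype.card V : ℝ) - 1 := by
    rw [Finset.card_erase_of_mem (Finset.mem_univ i0), Finset.card_univ,
      Nat.cast_sub hp0, Nat.cast_one]
  have herase : ∑ i ∈ Finset.univ.erase i0, lam i ^ 2
      = 2 * (graphDiam G : ℝ) * eccWiener G - |lam i0| ^ 2 := by
    have h := Finset.add_sum_erase Finset.univ (fun i => lam i ^ 2) (Finset.mem_univ i0)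
    rw [← hS, sq_abs]
    linarith
  have hCS : (∑ i ∈ Finset.univ.erase i0, |lam i|) ^ 2
      ≤ ((Fintype.card V : ℝ) - 1) * (2 * (graphDiam G : ℝ) * eccWiener G - |lam i0| ^ 2) := by
    have h := Finset.sum_mul_sq_le_sq_mul_sq (Finset.univ.erase i0)
      (fun _ => (1:ℝ)) (fun i => |lam i|)
    simp only [one_mul, one_pow, sq_abs] at h
    rw [Finset.sum_const, nsmul_eq_mul, mul_one] at h
    rw [← herase, ← hcard_erase]
    exact h
  have hE : eccEnergy G ≤ |lam i0| + Real.sqrt (((Fintype.card V : ℝ) - 1) *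
      (2 * (graphDiam G : ℝ) * eccWiener G - |lam i0| ^ 2)) := by
    have hsplit : eccEnergy G = |lam i0| + ∑ i ∈ Finset.univ.erase i0, |lam i| := by
      show (∑ i, |lam i|) = _
      rw [← Finset.add_sum_erase Finset.univ (fun i => |lam i|) (Finset.mem_univ i0)]
    rw [hsplit]
    gcongr
    exact Real.le_sqrt_of_sq_le hCS
  have hp12 : (Fintype.card V : ℝ) = 1 ∨ 2 ≤ (Fintype.card V : ℝ) := by
    rcases Nat.lt_or_ge (Fintype.card V) 2 with h | h
    · left
      have : Fintype.card V = 1 := by omega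
      rw [this]; norm_num
    · right; exact_mod_cast h
  have hSpb : 2 * (graphDiam G : ℝ) * eccWiener G ≤ (Fintype.card V : ℝ) *
      (2 * eccWiener G / (Fintype.card V : ℝ)) ^ 2 := by
    have heq : (Fintype.card V : ℝ) * (2 * eccWiener G / (Fintype.card V : ℝ)) ^ 2
        = 4 * eccWiener G ^ 2 / (Fintype.card V : ℝ) := by
      field_simp; ring
    rw [heq, le_div_iff₀ hp0']
    nlinarith [mul_le_mul_of_nonneg_left hpd hW0]
  have hmono := km_mono hp12 hb0 hb_le_a haS hSpb
  have hfinal : Real.sqrt (((Fintype.card V : ℝ) - 1) * (2 * (graphDiam G : ℝ) * eccWiener G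
      - (2 * eccWiener G / (Fintype.card V : ℝ)) ^ 2))
      = Real.sqrt (2 * ((Fintype.card V : ℝ) - 1) * eccWiener G *
        ((graphDiam G : ℝ) - 2 * eccWiener G / (Fintype.card V : ℝ) ^ 2)) := by
    congr 1
    field_simp
  calc eccEnergy G ≤ _ := hE
    _ ≤ _ := hmono
    _ = _ := by rw [hfinal]

end EccPaper
end
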